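/- Let f : F_q → F_q be a function with AddInd(f) > 1 (i.e., f is not an F_p-affine map). Then deg(f) · AddInd(f) ≥ q. -/

import Mathlib

open Polynomial

/-- A function `f : 𝔽_q → 𝔽_q` (with `q = p^n`) has codimension at most `k` if there are an
`𝔽_p`-linear map `L : 𝔽_q → 𝔽_q`, an `𝔽_p`-subspace `U` of dimension `n - k`, and a constant
`a_V` for each coset `V` of `U`, such that `f(x) = L(x) + a_{U+x}` for all `x`. -/
def HasCodimAtMost (p n : ℕ) {F : Type*} [Field F] [Fintype F] [Algebra (ZMod p) F]
    (f : F → F) (k : ℕ) : Prop :=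
  ∃ (L : F →ₗ[ZMod p] F) (U : Submodule (ZMod p) F) (a : F ⧸ U → F),
    Module.finrank (ZMod p) ↥U = n - k ∧
    ∀ x : F, f x = L x + a (Submodule.Quotient.mk x)

/-- The codimension `codim f` is the smallest `k` such that `f` has codimension at most `k`. -/
noncomputable def codim (p n : ℕ) {F : Type*} [Field F] [Fintype F] [Algebra (ZMod p) F]
    (f : F → F) : ℕ :=
  sInf {k | HasCodimAtMost p n f k}

/-- The additive index of `f` is `AddInd f = p ^ codim f`. -/
noncomputable def addInd (p n : ℕ) {F : Type*} [Field F] [Fintype F] [Algebra (ZMod p) F]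
    (f : F → F) : ℕ :=
  p ^ codim p n f

/-- The unique polynomial of degree at most `q - 1` interpolating `f` on `𝔽_q`;
`deg f` and the weight `w(f)` are its degree and its number of nonzero coefficients. -/
noncomputable def interp {F : Type*} [Field F] [Fintype F] [DecidableEq F] (f : F → F) : F[X] :=
  Lagrange.interpolate Finset.univ id f

/-- Let `f : 𝔽_q → 𝔽_q` with `AddInd f > 1` (i.e. `f` is not `𝔽_p`-affine).
Then `deg f · AddInd f ≥ q`. -/
theorem stmt10 (p n : ℕ) [Fact p.Prime] (hn : 1 ≤ n) {F : Type*} [Field F] [Fintype F]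
    [Algebra (ZMod p) F] [DecidableEq F] (hcard : Fintype.card F = p ^ n)
    (f : F → F) (h1 : 1 < addInd p n f) :
    Fintype.card F ≤ (interp f).natDegree * addInd p n f := by
  classical
  have hp : p.Prime := Fact.out
  set k := codim p n f with hkdef
  -- the defining set is nonempty: `n` belongs to it
  have hnmem : HasCodimAtMost p n f n := by
    refine ⟨0, ⊥, fun q => f ((Submodule.quotEquivOfEqBot ⊥ rfl) q), by simp, fun x => by simp⟩
  have hkmem : HasCodimAtMost p n f k := Nat.sInf_mem (⟨n, hnmem⟩ : {k | HasCodimAtMost p n f k}.Nonempty)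
  have hkn : k ≤ n := Nat.sInf_le (show n ∈ {k | HasCodimAtMost p n f k} from hnmem)
  have hk1 : 1 ≤ k := by
    rcases Nat.eq_zero_or_pos k with h0 | h; · simp [addInd, hkdef.symm, h0] at h1
    exact h
  obtain ⟨L, U, a, hU, hfx⟩ := hkmem
  set m := n - k with hm
  have hmk : m + k = n := Nat.sub_add_cancel hkn
  have hcardU : Fintype.card ↥U = p ^ m := by
    rw [Module.card_eq_pow_finrank (K := ZMod p) (V := ↥U), ZMod.card, hU]
  set P : F[X] := interp f with hP
  have hcard1 : 0 < Fintype.card F := Fintype.card_pos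
  have hPeval : ∀ c : F, P.eval c = f c := fun c =>
    Lagrange.eval_interpolate_at_node f (Set.injOn_id _) (Finset.mem_univ c)
  have hPdeg : P.natDegree < Fintype.card F := by
    rcases eq_or_ne P 0 with h0 | h0
    · simpa [h0] using hcard1
    · have := Lagrange.degree_interpolate_lt f (s := (Finset.univ : Finset F))
        (v := id) (Set.injOn_id _)
      rw [(Polynomial.natDegree_lt_iff_degree_lt h0)]
      rw [Finset.card_univ] at this
      exact this
  -- key polynomial identity on U
  have key : ∀ u ∈ U, Polynomial.taylor u P = P + C (L u) := by
    intro u hu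
    have hz : Polynomial.taylor u P - (P + C (L u)) = 0 := by
      apply Polynomial.eq_zero_of_natDegree_lt_card_of_eval_eq_zero _ (Function.injective_id)
      · intro x
        have hmkq : (Submodule.Quotient.mk (x + u) : F ⧸ U) = Submodule.Quotient.mk x := by
          rw [Submodule.Quotient.eq]; simpa using hu
        simp only [id_eq, eval_sub, eval_add, eval_C, Polynomial.taylor_eval, hPeval, hfx,
          map_add, hmkq]
        ring
      · refine lt_of_le_of_lt ?_ hPdeg
        refine (Polynomial.natDegree_sub_le _ _).trans ?_
        simp only [Polynomial.natDegree_taylor]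
        refine max_le le_rfl ((Polynomial.natDegree_add_le _ _).trans ?_)
        simp
    have := sub_eq_zero.mp hz
    exact this
  by_cases hd : p ^ m ≤ P.natDegree
  · -- main inequality
    calc Fintype.card F = p ^ m * p ^ k := by rw [hcard, ← hmk, pow_add]
      _ ≤ P.natDegree * addInd p n f := by
          apply Nat.mul_le_mul hd
          simp [addInd, hkdef.symm]
  · -- degree too small forces f affine, contradicting 1 ≤ k
    exfalso
    push_neg at hd
    have sU : Finset F := Set.toFinset (U : Set F)
    have hpsi : ∀ j, 1 ≤ j → Polynomial.hasseDeriv j P = C (P.coeff j) := by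
      intro j hj
      have hz : Polynomial.hasseDeriv j P - C (P.coeff j) = 0 := by
        apply Polynomial.eq_zero_of_natDegree_lt_card_of_eval_eq_zero' _
          (Set.toFinset (U : Set F))
        · intro u hu
          rw [Set.mem_toFinset] at hu
          have h2 := congrArg (fun Q => Polynomial.coeff Q j) (key u hu)
          simp only [Polynomial.taylor_coeff, Polynomial.coeff_add, Polynomial.coeff_C] at h2
          rw [eval_sub, eval_C, h2]
          have : ¬ (j = 0) := by omega
          simp [this]
        · have hcardsU : (Set.toFinset (U : Set F)).card = p ^ m := by
            rw [Set.toFinset_card]; exact hcardU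
          rw [hcardsU]
          refine lt_of_le_of_lt ?_ hd
          refine (Polynomial.natDegree_sub_le _ _).trans (max_le ?_ (by simp))
          exact (Polynomial.natDegree_hasseDeriv_le _ _).trans (Nat.sub_le _ _)
      have := sub_eq_zero.mp hz
      exact this
    -- hence all first differences of f are constant
    have const : ∀ u x : F, f (x + u) = f x + (f u - f 0) := by
      intro u x
      have h3 : Polynomial.taylor u P - P = C ((Polynomial.taylor u P - P).coeff 0) := by
        apply Polynomial.eq_C_of_natDegree_le_zero
        rw [Polynomial.natDegree_le_iff_coeff_eq_zero]
        intro j hj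
        have hj1 : 1 ≤ j := hj
        rw [Polynomial.coeff_sub, Polynomial.taylor_coeff, hpsi j hj1, eval_C, sub_self]
      have e1 := congrArg (Polynomial.eval x) h3
      have e0 := congrArg (Polynomial.eval 0) h3
      simp only [eval_sub, eval_C, Polynomial.taylor_eval, hPeval, zero_add] at e1 e0
      have e2 := e1.trans e0.symm
      linear_combination e2
    -- build the additive map x ↦ f x - f 0
    let g : F →+ F :=
      { toFun := fun x => f x - f 0
        map_zero' := sub_self _
        map_add' := by
          intro x y
          have h := const y x
          show f (x + y) - f 0 = (f x - f 0) + (f y - f 0)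
          rw [h]; ring }
    have hfinrank : Module.finrank (ZMod p) F = n := by
      have h1' : p ^ Module.finrank (ZMod p) F = p ^ n := by
        rw [← hcard, Module.card_eq_pow_finrank (K := ZMod p) (V := F), ZMod.card]
      exact Nat.pow_right_injective hp.two_le h1'
    have h0 : HasCodimAtMost p n f 0 := by
      refine ⟨g.toZModLinearMap p, ⊤, fun _ => f 0, ?_, fun x => ?_⟩
      · rw [finrank_top, hfinrank]; simp
      · simp [g, AddMonoidHom.toZModLinearMap]
    have hk0 : k = 0 := Nat.le_antisymm (Nat.sInf_le (show 0 ∈ {k | HasCodimAtMost p n f k} from h0)) (Nat.zero_le _)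
    omega
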